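/- arXiv:1903.09723 — 7 statements merged into one kernel-verified Lean document; each statement's English description precedes it below -/
import Mathlib

section
/- Let (Γ, w) be a connected weighted graph with 0 < L_w and B_w < ∞. Then there exists a maximal reduced weight function w* on Γ with w* ≤ w; namely w*(x,y) = d_w(x,y) for each edge (x,y) is reduced, satisfies w* ≤ w, and any reduced weight function u with u ≤ w satisfies u ≤ w*. -/
/-- The total weight of a walk in a weighted graph. -/
noncomputable def walkSum {V : Type*} {G : SimpleGraph V} (w : V → V → ℝ)
    {x y : V} (p : G.Walk x y) : ℝ :=
  (p.darts.map fun d => w d.toProd.1 d.toProd.2).sum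

open Classical in
/-- The path metric `d_w(x,y) = min(B, δ_w(x,y))`, realized as the infimum of the
set consisting of the cap `B` together with all total weights of walks from `x` to `y`
(so `d_w(x,y) = B` when there is no walk), with `d_w(x,x) = 0`. -/
noncomputable def dW {V : Type*} (G : SimpleGraph V) (w : V → V → ℝ) (B : ℝ)
    (x y : V) : ℝ :=
  if x = y then 0 else sInf ({B} ∪ {s : ℝ | ∃ p : G.Walk x y, s = walkSum w p})

lemma walkSum_nil {V : Type*} {G : SimpleGraph V} (w : V → V → ℝ) (x : V) :
    walkSum w (SimpleGraph.Walk.nil : G.Walk x x) = 0 := by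
  simp [walkSum]

lemma walkSum_cons {V : Type*} {G : SimpleGraph V} (w : V → V → ℝ)
    {x y z : V} (h : G.Adj x y) (p : G.Walk y z) :
    walkSum w (SimpleGraph.Walk.cons h p) = w x y + walkSum w p := by
  simp [walkSum]

lemma walkSum_append {V : Type*} {G : SimpleGraph V} (w : V → V → ℝ)
    {x y z : V} (p : G.Walk x y) (q : G.Walk y z) :
    walkSum w (p.append q) = walkSum w p + walkSum w q := by
  simp [walkSum, SimpleGraph.Walk.darts_append]

/-- for a connected weighted graph `(Γ, w)` with `0 < L_w` and
`B_w < ∞`, the weight function `w* (x,y) = d_w(x,y)` (on edges) is reduced,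
satisfies `w* ≤ w`, and is maximal among reduced weight functions `u ≤ w`.
(Here reducedness is expressed by the equivalent path condition of Lemma 2.2.) -/
theorem stmt_2 {V : Type*} (G : SimpleGraph V) (w : V → V → ℝ)
    (hsymm : ∀ x y : V, w x y = w y x)
    (L B : ℝ)
    (hL : IsGLB {r : ℝ | ∃ x y : V, G.Adj x y ∧ r = w x y} L)
    (hB : IsLUB {r : ℝ | ∃ x y : V, G.Adj x y ∧ r = w x y} B)
    (hLpos : 0 < L)
    (hconn : G.Connected) :
    (∀ x y : V, G.Adj x y → dW G w B x y ≤ w x y) ∧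
    (∀ x y : V, G.Adj x y → ∀ p : G.Walk x y,
      dW G w B x y ≤ walkSum (fun a b => dW G w B a b) p) ∧
    (∀ u : V → V → ℝ, (∀ x y : V, u x y = u y x) →
      (∀ x y : V, G.Adj x y → u x y ≤ w x y) →
      (∀ x y : V, G.Adj x y → ∀ p : G.Walk x y, u x y ≤ walkSum u p) →
      ∀ x y : V, G.Adj x y → u x y ≤ dW G w B x y) := by
  classical
  have hwL : ∀ {x y : V}, G.Adj x y → L ≤ w x y := fun h => hL.1 ⟨_, _, h, rfl⟩
  have hwB : ∀ {x y : V}, G.Adj x y → w x y ≤ B := fun h => hB.1 ⟨_, _, h, rfl⟩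
  have hB0 : ∀ {x y : V}, G.Adj x y → (0 : ℝ) ≤ B := fun h =>
    le_trans (le_trans hLpos.le (hwL h)) (hwB h)
  have hsum_nonneg : ∀ {x y : V} (p : G.Walk x y), 0 ≤ walkSum w p := by
    intro x y p
    apply List.sum_nonneg
    intro a ha
    obtain ⟨d, hd, rfl⟩ := List.mem_map.1 ha
    exact le_trans hLpos.le (hwL d.adj)
  have hbdd : ∀ {x₀ y₀ : V}, G.Adj x₀ y₀ → ∀ (x y : V),
      BddBelow ({B} ∪ {s : ℝ | ∃ p : G.Walk x y, s = walkSum w p}) := by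
    intro x₀ y₀ h x y
    refine ⟨0, ?_⟩
    rintro s (hs | ⟨p, rfl⟩)
    · simp only [Set.mem_singleton_iff] at hs
      exact hs ▸ hB0 h
    · exact hsum_nonneg p
  have hne : ∀ (x y : V),
      ({B} ∪ {s : ℝ | ∃ p : G.Walk x y, s = walkSum w p}).Nonempty :=
    fun x y => ⟨B, Or.inl rfl⟩
  -- Part 1
  have h1 : ∀ x y : V, G.Adj x y → dW G w B x y ≤ w x y := by
    intro x y hxy
    rw [dW, if_neg hxy.ne]
    refine csInf_le (hbdd hxy x y) (Or.inr ⟨SimpleGraph.Walk.cons hxy .nil, ?_⟩)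
    simp [walkSum_cons, walkSum_nil]
  -- existence of cheap walks
  have hex : ∀ {x₀ y₀ : V}, G.Adj x₀ y₀ → ∀ (x y : V) (p : G.Walk x y) (ε : ℝ),
      0 < ε → ∃ q : G.Walk x y,
        walkSum w q ≤ walkSum (fun a b => dW G w B a b) p + ε := by
    intro x₀ y₀ h₀ x y p
    induction p with
    | nil =>
      intro ε hε
      refine ⟨.nil, ?_⟩
      rw [walkSum_nil, walkSum_nil]
      linarith
    | @cons a b c h p ih =>
      intro ε hε
      obtain ⟨q', hq'⟩ := ih (ε / 2) (by linarith)
      have hab : dW G w B a b =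
          sInf ({B} ∪ {s : ℝ | ∃ p : G.Walk a b, s = walkSum w p}) := by
        rw [dW, if_neg h.ne]
      obtain ⟨s, hs, hslt⟩ := exists_lt_of_csInf_lt (hne a b)
        (show sInf ({B} ∪ {s : ℝ | ∃ p : G.Walk a b, s = walkSum w p}) <
            sInf ({B} ∪ {s : ℝ | ∃ p : G.Walk a b, s = walkSum w p}) + ε / 2 from
          lt_add_of_pos_right _ (by linarith))
      have hr : ∃ r : G.Walk a b, walkSum w r ≤ dW G w B a b + ε / 2 := by
        rcases hs with hs | ⟨r, rfl⟩
        · simp only [Set.mem_singleton_iff] at hs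
          refine ⟨SimpleGraph.Walk.cons h .nil, ?_⟩
          rw [walkSum_cons, walkSum_nil, hab]
          have := hwB h
          linarith [hs ▸ hslt]
        · exact ⟨r, by rw [hab]; exact hslt.le⟩
      obtain ⟨r, hr⟩ := hr
      refine ⟨r.append q', ?_⟩
      rw [walkSum_append, walkSum_cons]
      linarith
  -- Part 2
  have h2 : ∀ x y : V, G.Adj x y → ∀ p : G.Walk x y,
      dW G w B x y ≤ walkSum (fun a b => dW G w B a b) p := by
    intro x y hxy p
    refine le_of_forall_pos_le_add ?_
    intro ε hε
    obtain ⟨q, hq⟩ := hex hxy x y p ε hε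
    rw [dW, if_neg hxy.ne]
    exact le_trans (csInf_le (hbdd hxy x y) (Or.inr ⟨q, rfl⟩)) hq
  refine ⟨h1, h2, ?_⟩
  -- Part 3
  intro u husymm hulew hured x y hxy
  rw [dW, if_neg hxy.ne]
  refine le_csInf (hne x y) ?_
  rintro s (hs | ⟨p, rfl⟩)
  · simp only [Set.mem_singleton_iff] at hs
    exact hs ▸ le_trans (hulew x y hxy) (hwB hxy)
  · refine le_trans (hured x y hxy p) ?_
    apply List.sum_le_sum
    intro d hd
    exact hulew _ _ d.adj
end

section
/- Let X be a metric space, (Y, φ) a minimal S-extension of X. Then Y is a homogeneous metric space: for all y_1, y_2 ∈ Y there is a surjective isometry of Y sending y_2 to y_1. -/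
/-- `f` (with domain the finite set `D`) is a partial isometry of the subspace `X`
of `Y`. -/
def IsPartialIso {Y : Type*} [MetricSpace Y] (X : Set Y) (D : Finset Y) (f : Y → Y) : Prop :=
  ↑D ⊆ X ∧ (∀ a ∈ D, f a ∈ X) ∧ ∀ a ∈ D, ∀ b ∈ D, dist (f a) (f b) = dist a b

lemma fold_eq {Y : Type*} [MetricSpace Y] (φ : Finset Y → (Y → Y) → (Y ≃ᵢ Y))
    (l : List (Finset Y × (Y → Y))) (a₀ : Y) :
    l.foldr (fun p z => φ p.1 p.2 z) a₀ =
      (l.foldr (fun p g => g.trans (φ p.1 p.2)) (IsometryEquiv.refl Y)) a₀ := by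
  induction l with
  | nil => rfl
  | cons h t ih => simp [List.foldr, ih]

/-- if `(Y, φ)` is a minimal S-extension of `X` (every point of `Y`
has the form `φ(p₁)⋯φ(pₙ)(a₀)`), then `Y` is homogeneous: for all `y₁, y₂ ∈ Y`
there is a surjective isometry of `Y` sending `y₂` to `y₁`. -/
theorem stmt_6 {Y : Type*} [MetricSpace Y] (X : Set Y) (a₀ : Y) (ha₀ : a₀ ∈ X)
    (φ : Finset Y → (Y → Y) → (Y ≃ᵢ Y))
    (hφ : ∀ D f, IsPartialIso X D f → ∀ a ∈ D, φ D f a = f a)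
    (hmin : ∀ y : Y, ∃ l : List (Finset Y × (Y → Y)),
        (∀ p ∈ l, IsPartialIso X p.1 p.2) ∧
        y = l.foldr (fun p z => φ p.1 p.2 z) a₀) :
    ∀ y₁ y₂ : Y, ∃ ψ : Y ≃ᵢ Y, ψ y₂ = y₁ := by
  intro y₁ y₂
  obtain ⟨l₁, -, h₁⟩ := hmin y₁
  obtain ⟨l₂, -, h₂⟩ := hmin y₂
  set G₁ := l₁.foldr (fun p g => g.trans (φ p.1 p.2)) (IsometryEquiv.refl Y)
  set G₂ := l₂.foldr (fun p g => g.trans (φ p.1 p.2)) (IsometryEquiv.refl Y)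
  refine ⟨G₂.symm.trans G₁, ?_⟩
  have e₁ : y₁ = G₁ a₀ := by rw [h₁, fold_eq]
  have e₂ : y₂ = G₂ a₀ := by rw [h₂, fold_eq]
  simp [e₁, e₂]
end

section
/- Every finite homogeneous ultrametric space is ultrahomogeneous: if Y is a finite ultrametric space such that for all y_1, y_2 ∈ Y there is a surjective isometry of Y sending y_1 to y_2, then every isometry between two subsets of Y extends to a surjective isometry of Y. -/
open Metric

section Aux

variable {Y : Type*} [MetricSpace Y] [Finite Y]

/-- One-point extension of a partial isometry in a finite homogeneous ultrametric space. -/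
lemma stmt7_ext_one (hum : ∀ x y z : Y, dist x z ≤ max (dist x y) (dist y z))
    (hhom : ∀ y₁ y₂ : Y, ∃ ψ : Y ≃ᵢ Y, ψ y₁ = y₂)
    (A : Set Y) (f : Y → Y)
    (hf : ∀ a ∈ A, ∀ b ∈ A, dist (f a) (f b) = dist a b) (y : Y) :
    ∃ z : Y, ∀ a ∈ A, dist z (f a) = dist y a := by
  classical
  rcases A.eq_empty_or_nonempty with hA | hA
  · exact ⟨y, by simp [hA]⟩
  obtain ⟨a₀, ha₀A, ha₀min⟩ := Set.exists_min_image A (fun a => dist y a) (Set.toFinite A) hA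
  by_cases hr0 : dist y a₀ = 0
  · have hy : y = a₀ := by rwa [dist_eq_zero] at hr0
    subst hy
    exact ⟨f y, fun a ha => hf y ha₀A a ha⟩
  set r := dist y a₀ with hrdef
  have hrpos : 0 < r := lt_of_le_of_ne dist_nonneg (Ne.symm hr0)
  obtain ⟨ψ, hψ⟩ := hhom a₀ (f a₀)
  -- auxiliary ultrametric fact
  have aux : ∀ p u w : Y, dist u p ≤ r → r < dist p w → dist u w = dist p w := by
    intro p u w h1 h2
    have hle : dist u w ≤ dist p w := (hum u p w).trans (max_le (h1.trans h2.le) le_rfl)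
    have hge : dist p w ≤ dist u w := by
      by_contra hcon
      push_neg at hcon
      have h3 : dist p u ≤ r := by rw [dist_comm]; exact h1
      have hmax : max (dist p u) (dist u w) < dist p w := max_lt (lt_of_le_of_lt h3 h2) hcon
      exact absurd (hum p u w) (not_le.2 hmax)
    exact le_antisymm hle hge
  set q : Y → Set Y := fun x => ball x r with hq
  have qeq : ∀ u v : Y, q u = q v ↔ dist u v < r := by
    intro u v
    constructor
    · intro h
      have h2 : u ∈ q u := by simp [hq, mem_ball_self hrpos]
      rw [h] at h2
      simpa [hq, mem_ball] using h2
    · intro h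
      ext w
      simp only [hq, mem_ball]
      constructor
      · intro hw
        exact lt_of_le_of_lt (hum w u v) (max_lt hw h)
      · intro hw
        have h' : dist v u < r := by rwa [dist_comm]
        exact lt_of_le_of_lt (hum w v u) (max_lt hw h')
  set X : Set Y := A ∩ closedBall a₀ r with hX
  set T : Y → Set (Set Y) := fun p => q '' closedBall p r with hT
  set U : Set (Set Y) := q '' X with hU
  set V : Set (Set Y) := q '' (f '' X) with hV
  -- the two closed balls have the same number of classes
  have himgq : ∀ x : Y, q (ψ x) = ψ '' q x := by
    intro x
    simp only [hq]
    exact (ψ.image_ball x r).symm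
  have hball : closedBall (f a₀) r = ψ '' closedBall a₀ r := by
    rw [ψ.image_closedBall, hψ]
  have hTim : T (f a₀) = (Set.image ψ) '' T a₀ := by
    simp only [hT, hball, Set.image_image]
    exact Set.image_congr fun x _ => himgq x
  have hcardT : (T (f a₀)).ncard = (T a₀).ncard := by
    rw [hTim]
    exact Set.ncard_image_of_injective _ (Set.image_injective.mpr ψ.injective)
  -- q y is a class of the ball around a₀ not hit by X
  have hyball : y ∈ closedBall a₀ r := by rw [mem_closedBall]
  have hyT : q y ∈ T a₀ := ⟨y, hyball, rfl⟩
  have hyU : q y ∉ U := by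
    rintro ⟨a, haX, hqa⟩
    have : dist a y < r := (qeq a y).1 hqa
    rw [dist_comm] at this
    exact absurd (ha₀min a haX.1) (not_le.2 this)
  have hUT : U ⊆ T a₀ := Set.image_mono Set.inter_subset_right
  have hUlt : U.ncard < (T a₀).ncard :=
    Set.ncard_lt_ncard ⟨hUT, fun h => hyU (h hyT)⟩ (Set.toFinite _)
  -- V is an image of U
  set F : Set Y → Set Y := fun c => if h : ∃ a ∈ X, q a = c then q (f h.choose) else c with hF
  have hVFU : V = F '' U := by
    apply Set.eq_of_subset_of_subset
    · rintro _ ⟨_, ⟨a, haX, rfl⟩, rfl⟩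
      refine ⟨q a, ⟨a, haX, rfl⟩, ?_⟩
      have hex : ∃ a' ∈ X, q a' = q a := ⟨a, haX, rfl⟩
      simp only [hF, dif_pos hex]
      obtain ⟨ha'X, ha'q⟩ := hex.choose_spec
      refine (qeq _ _).2 ?_
      rw [hf _ ha'X.1 _ haX.1]
      exact (qeq _ _).1 ha'q
    · rintro _ ⟨_, ⟨a, haX, rfl⟩, rfl⟩
      have hex : ∃ a' ∈ X, q a' = q a := ⟨a, haX, rfl⟩
      simp only [hF, dif_pos hex]
      exact ⟨f hex.choose, ⟨hex.choose, hex.choose_spec.1, rfl⟩, rfl⟩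
  have hVU : V.ncard ≤ U.ncard := by
    rw [hVFU]; exact Set.ncard_image_le (Set.toFinite _)
  -- find a free class in the image ball
  have hnotsub : ¬ (T (f a₀) ⊆ V) := by
    intro h
    have := Set.ncard_le_ncard h (Set.toFinite _)
    omega
  obtain ⟨c, hcT, hcV⟩ := Set.not_subset.1 hnotsub
  obtain ⟨z, hzball, rfl⟩ := hcT
  rw [mem_closedBall] at hzball
  refine ⟨z, fun a ha => ?_⟩
  by_cases hcase : dist a₀ a ≤ r
  · have haX : a ∈ X := ⟨ha, by rw [mem_closedBall, dist_comm]; exact hcase⟩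
    have h1 : dist y a = r :=
      le_antisymm ((hum y a₀ a).trans (max_le le_rfl hcase)) (ha₀min a ha)
    have h2 : dist z (f a) ≤ r := by
      refine (hum z (f a₀) (f a)).trans (max_le hzball ?_)
      rw [hf a₀ ha₀A a ha]; exact hcase
    have h3 : ¬ dist z (f a) < r := by
      intro h
      have : dist (f a) z < r := by rwa [dist_comm] at h
      exact hcV ⟨f a, ⟨a, haX, rfl⟩, (qeq _ _).2 this⟩
    rw [h1]
    exact le_antisymm h2 (not_lt.1 h3)
  · push_neg at hcase
    have h1 : dist y a = dist a₀ a := aux a₀ y a le_rfl hcase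
    have hgt : r < dist (f a₀) (f a) := by rw [hf a₀ ha₀A a ha]; exact hcase
    have h2 : dist z (f a) = dist (f a₀) (f a) := aux (f a₀) z (f a) hzball hgt
    rw [h1, h2, hf a₀ ha₀A a ha]

/-- Extending a partial isometry to a global distance-preserving map, by induction on the
size of the complement of the domain. -/
lemma stmt7_extend_all (hum : ∀ x y z : Y, dist x z ≤ max (dist x y) (dist y z))
    (hhom : ∀ y₁ y₂ : Y, ∃ ψ : Y ≃ᵢ Y, ψ y₁ = y₂) :
    ∀ (n : ℕ) (A : Set Y) (f : Y → Y),
      Aᶜ.ncard ≤ n →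
      (∀ a ∈ A, ∀ b ∈ A, dist (f a) (f b) = dist a b) →
      ∃ g : Y → Y, (∀ x z : Y, dist (g x) (g z) = dist x z) ∧ ∀ a ∈ A, g a = f a := by
  classical
  intro n
  induction n with
  | zero =>
    intro A f hcard hf
    have hAc : Aᶜ = ∅ := (Set.ncard_eq_zero (Set.toFinite _)).1 (Nat.le_zero.1 hcard)
    have hA : A = Set.univ := by
      rw [← Set.compl_empty, ← hAc, compl_compl]
    exact ⟨f, fun x z => hf x (by simp [hA]) z (by simp [hA]), fun a _ => rfl⟩
  | succ n ih =>
    intro A f hcard hf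
    rcases (Aᶜ).eq_empty_or_nonempty with hAc | ⟨y, hy⟩
    · have hA : A = Set.univ := by
        rw [← Set.compl_empty, ← hAc, compl_compl]
      exact ⟨f, fun x z => hf x (by simp [hA]) z (by simp [hA]), fun a _ => rfl⟩
    · obtain ⟨z, hzspec⟩ := stmt7_ext_one hum hhom A f hf y
      set f' : Y → Y := Function.update f y z with hf'def
      set A' : Set Y := insert y A with hA'def
      have hyA : y ∉ A := hy
      have hfa : ∀ a ∈ A, f' a = f a := by
        intro a ha
        have hay : a ≠ y := fun h => hyA (by rw [← h]; exact ha)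
        exact Function.update_of_ne hay _ _
      have hfy : f' y = z := Function.update_self _ _ _
      have hf' : ∀ a ∈ A', ∀ b ∈ A', dist (f' a) (f' b) = dist a b := by
        intro a ha b hb
        rcases Set.mem_insert_iff.1 ha with ha' | ha' <;>
          rcases Set.mem_insert_iff.1 hb with hb' | hb'
        · rw [ha', hb']; simp
        · rw [ha', hfy, hfa b hb']; exact hzspec b hb'
        · rw [hb', hfy, hfa a ha', dist_comm (f a) z, dist_comm a y]; exact hzspec a ha'
        · rw [hfa a ha', hfa b hb']; exact hf a ha' b hb'
      have hcard' : A'ᶜ.ncard ≤ n := by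
        have h1 : A'ᶜ = Aᶜ \ {y} := by
          ext x
          simp only [hA'def, Set.mem_compl_iff, Set.mem_insert_iff, Set.mem_diff,
            Set.mem_singleton_iff]
          tauto
        rw [h1, Set.ncard_diff_singleton_of_mem hy]
        have h2 : 1 ≤ (Aᶜ).ncard := by
          rw [Nat.one_le_iff_ne_zero]
          intro h
          rw [(Set.ncard_eq_zero (Set.toFinite _)).1 h] at hy
          exact hy
        omega
      obtain ⟨g, hg1, hg2⟩ := ih A' f' hcard' hf'
      refine ⟨g, hg1, fun a ha => ?_⟩
      rw [hg2 a (Set.mem_insert_of_mem _ ha), hfa a ha]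

end Aux

/-- every finite homogeneous ultrametric space is ultrahomogeneous:
if for all `y₁, y₂` there is a surjective isometry sending `y₁` to `y₂`, then every
isometry between two subsets of `Y` extends to a surjective isometry of `Y`. -/
theorem stmt_7 {Y : Type*} [MetricSpace Y] [Finite Y]
    (hum : ∀ x y z : Y, dist x z ≤ max (dist x y) (dist y z))
    (hhom : ∀ y₁ y₂ : Y, ∃ ψ : Y ≃ᵢ Y, ψ y₁ = y₂) :
    ∀ (A : Set Y) (f : Y → Y),
      (∀ a ∈ A, ∀ b ∈ A, dist (f a) (f b) = dist a b) →
      ∃ ψ : Y ≃ᵢ Y, ∀ a ∈ A, ψ a = f a := by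
  intro A f hf
  obtain ⟨g, hg1, hg2⟩ := stmt7_extend_all hum hhom (Aᶜ.ncard) A f le_rfl hf
  have hinj : Function.Injective g := by
    intro x z h
    have := hg1 x z
    rw [h, dist_self] at this
    exact (dist_eq_zero.1 this.symm)
  have hbij := Finite.injective_iff_bijective.1 hinj
  refine ⟨⟨Equiv.ofBijective g hbij, Isometry.of_dist_eq hg1⟩, fun a ha => ?_⟩
  simpa using hg2 a ha
end

section
/- Every finite ultrametric space X can be isometrically embedded into a finite homogeneous ultrametric space Y whose set of nonzero distances equals the set of nonzero distances of X. -/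
open Finset

namespace Stmt11

variable {X : Type*} [MetricSpace X] [Fintype X]

/-- The finset of nonzero distances of `X`. -/
noncomputable def DF (X : Type*) [MetricSpace X] [Fintype X] : Finset ℝ :=
  (@Finset.filter _ (fun p : X × X => p.1 ≠ p.2) (Classical.decPred _) univ).image
    fun p => dist p.1 p.2

lemma mem_DF {r : ℝ} : r ∈ DF X ↔ ∃ x₁ x₂ : X, x₁ ≠ x₂ ∧ r = dist x₁ x₂ := by
  constructor
  · intro h
    simp only [DF, Finset.mem_image, Finset.mem_filter] at h
    obtain ⟨⟨a, b⟩, ⟨-, hab⟩, h⟩ := h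
    exact ⟨a, b, hab, h.symm⟩
  · rintro ⟨a, b, hab, rfl⟩
    simp only [DF, Finset.mem_image, Finset.mem_filter]
    exact ⟨⟨a, b⟩, ⟨Finset.mem_univ _, hab⟩, rfl⟩

lemma DF_pos {r : ℝ} (h : r ∈ DF X) : 0 < r := by
  obtain ⟨a, b, hab, rfl⟩ := mem_DF.1 h
  exact dist_pos.2 hab

/-- The ball of radius `< r` around `x`. -/
noncomputable def S (r : ℝ) (x : X) : Finset X :=
  @Finset.filter _ (fun z => dist x z < r) (Classical.decPred _) univ

lemma mem_S {r : ℝ} {x z : X} : z ∈ S r x ↔ dist x z < r := by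
  simp [S]

lemma S_nonempty {r : ℝ} (hr : 0 < r) (x : X) : (S r x).Nonempty :=
  ⟨x, mem_S.2 (by simpa using hr)⟩

lemma S_eq (hum : ∀ x y z : X, dist x z ≤ max (dist x y) (dist y z))
    {r : ℝ} {x y : X} (h : dist x y < r) : S r x = S r y := by
  ext z
  simp only [mem_S]
  constructor
  · intro hz
    calc dist y z ≤ max (dist y x) (dist x z) := hum y x z
      _ < r := by rw [dist_comm y x]; exact max_lt h hz
  · intro hz
    calc dist x z ≤ max (dist x y) (dist y z) := hum x y z
      _ < r := max_lt h hz

lemma min'_congr {α : Type} [LinearOrder α] {s t : Finset α} (h : s = t)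
    (hs : s.Nonempty) (ht : t.Nonempty) : s.min' hs = t.min' ht := by
  subst h; rfl

/-- Index of the ball of radius `< r` containing `x`, as a natural number. -/
noncomputable def idx (r : ℝ) (hr : 0 < r) (x : X) : ℕ :=
  (((S r x).image fun z => ((Fintype.equivFin X z : ℕ)))).min'
    ((Finset.image_nonempty).2 (S_nonempty hr x))

lemma idx_mem {r : ℝ} (hr : 0 < r) (x : X) :
    idx r hr x ∈ (S r x).image fun z => ((Fintype.equivFin X z : ℕ)) :=
  Finset.min'_mem _ _

lemma idx_lt {r : ℝ} (hr : 0 < r) (x : X) : idx r hr x < Fintype.card X := by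
  obtain ⟨z, -, hz⟩ := Finset.mem_image.1 (idx_mem hr x)
  rw [← hz]
  exact (Fintype.equivFin X z).isLt

lemma idx_eq_iff (hum : ∀ x y z : X, dist x z ≤ max (dist x y) (dist y z))
    {r : ℝ} (hr : 0 < r) (x y : X) : idx r hr x = idx r hr y ↔ dist x y < r := by
  constructor
  · intro h
    obtain ⟨z, hz, hz'⟩ := Finset.mem_image.1 (idx_mem hr x)
    obtain ⟨w, hw, hw'⟩ := Finset.mem_image.1 (idx_mem hr y)
    have : z = w := by
      have : (Fintype.equivFin X z : ℕ) = (Fintype.equivFin X w : ℕ) := by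
        rw [hz', hw', h]
      exact (Fintype.equivFin X).injective (Fin.val_injective this)
    subst this
    calc dist x y ≤ max (dist x z) (dist z y) := hum x z y
      _ < r := max_lt (mem_S.1 hz) (by rw [dist_comm]; exact mem_S.1 hw)
  · intro h
    unfold idx
    exact min'_congr (by rw [S_eq hum h]) _ _

/-- The size of the coordinate group. -/
def mX (X : Type*) [Fintype X] : ℕ := Fintype.card X + 2

/-- The ambient homogeneous space. -/
def YT (X : Type*) [MetricSpace X] [Fintype X] : Type :=
  ↥(DF X) → ZMod (mX X)

noncomputable instance : Fintype (YT X) := by unfold YT mX; infer_instance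

instance : AddCommGroup (YT X) := by unfold YT mX; exact Pi.addCommGroup

/-- Coordinates where two points of `Y` differ. -/
noncomputable def dif (a b : YT X) : Finset ↥(DF X) :=
  @Finset.filter _ (fun r => a r ≠ b r) (Classical.decPred _) univ

lemma mem_dif {a b : YT X} {r : ↥(DF X)} : r ∈ dif a b ↔ a r ≠ b r := by
  simp [dif]

/-- The distance on `Y`, as a nonnegative real. -/
noncomputable def dYn (a b : YT X) : NNReal :=
  (dif a b).sup fun r => Real.toNNReal r.1

/-- The distance on `Y`. -/
noncomputable def dY (a b : YT X) : ℝ := (dYn a b : ℝ)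

lemma dif_comm (a b : YT X) : dif a b = dif b a := by
  ext r; simp [mem_dif, ne_comm]

lemma dY_comm (a b : YT X) : dY a b = dY b a := by rw [dY, dY, dYn, dYn, dif_comm]

lemma dY_self (a : YT X) : dY a a = 0 := by
  have : dif a a = ∅ := by ext r; simp [mem_dif]
  simp [dY, dYn, this]

lemma dY_nonneg (a b : YT X) : 0 ≤ dY a b := (dYn a b).coe_nonneg

lemma dY_mem_DF {a b : YT X} (h : a ≠ b) : dY a b ∈ DF X ∧ 0 < dY a b := by
  have hne : (dif a b).Nonempty := by
    obtain ⟨r, hr⟩ := Function.ne_iff.1 h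
    exact ⟨r, mem_dif.2 hr⟩
  obtain ⟨r, hr, hsup⟩ := Finset.exists_mem_eq_sup (dif a b) hne
    fun r => Real.toNNReal r.1
  have hrpos : 0 < r.1 := DF_pos r.2
  have : dY a b = r.1 := by
    rw [dY, dYn, hsup, Real.coe_toNNReal _ hrpos.le]
  rw [this]
  exact ⟨r.2, hrpos⟩

lemma dY_ultra (a b c : YT X) : dY a c ≤ max (dY a b) (dY b c) := by
  have h : dYn a c ≤ dYn a b ⊔ dYn b c := by
    apply Finset.sup_le
    intro r hr
    have : a r ≠ b r ∨ b r ≠ c r := by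
      by_contra hcon
      push_neg at hcon
      exact mem_dif.1 hr (hcon.1.trans hcon.2)
    rcases this with h1 | h1
    · exact le_sup_of_le_left
        (Finset.le_sup (f := fun r : ↥(DF X) => Real.toNNReal r.1) (mem_dif.2 h1))
    · exact le_sup_of_le_right
        (Finset.le_sup (f := fun r : ↥(DF X) => Real.toNNReal r.1) (mem_dif.2 h1))
  calc dY a c ≤ ((dYn a b ⊔ dYn b c : NNReal) : ℝ) := NNReal.coe_mono h
    _ = max (dY a b) (dY b c) := by
        simp only [dY]
        rcases le_total (dYn a b) (dYn b c) with h' | h'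
        · rw [sup_eq_right.2 h', max_eq_right (NNReal.coe_mono h')]
        · rw [sup_eq_left.2 h', max_eq_left (NNReal.coe_mono h')]

/-- The embedding of `X` into `Y`. -/
noncomputable def emb (x : X) : YT X :=
  fun r => ((idx r.1 (DF_pos r.2) x : ℕ) : ZMod (mX X))

lemma emb_coord_eq_iff (hum : ∀ x y z : X, dist x z ≤ max (dist x y) (dist y z))
    (x y : X) (r : ↥(DF X)) : emb x r = emb y r ↔ dist x y < r.1 := by
  have hr : (0:ℝ) < r.1 := DF_pos r.2
  rw [← idx_eq_iff hum hr x y]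
  constructor
  · intro h
    have h1 : idx r.1 hr x < mX X := (idx_lt hr x).trans_le (by simp [mX])
    have h2 : idx r.1 hr y < mX X := (idx_lt hr y).trans_le (by simp [mX])
    have h' := congrArg ZMod.val h
    simp only [emb] at h'
    rwa [ZMod.val_natCast_of_lt h1, ZMod.val_natCast_of_lt h2] at h'
  · intro h
    simp [emb, h]

lemma dY_emb (hum : ∀ x y z : X, dist x z ≤ max (dist x y) (dist y z))
    (x y : X) : dY (emb x) (emb y) = dist x y := by
  rcases eq_or_ne x y with rfl | hxy
  · simp [dY_self]
  · have hd : dist x y ∈ DF X := mem_DF.2 ⟨x, y, hxy, rfl⟩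
    have hdif : ∀ r : ↥(DF X), r ∈ dif (emb x) (emb y) ↔ r.1 ≤ dist x y := by
      intro r
      rw [mem_dif, ne_eq, emb_coord_eq_iff hum, not_lt]
    have : dYn (emb x) (emb y) = Real.toNNReal (dist x y) := by
      apply le_antisymm
      · apply Finset.sup_le
        intro r hr
        exact Real.toNNReal_mono ((hdif r).1 hr)
      · exact Finset.le_sup (f := fun r : ↥(DF X) => Real.toNNReal r.1)
          ((hdif ⟨dist x y, hd⟩).2 le_rfl)
    rw [dY, this, Real.coe_toNNReal _ dist_nonneg]

end Stmt11

open Stmt11 in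
/-- every finite ultrametric space `X` embeds isometrically into a
finite homogeneous ultrametric space `Y` whose set of nonzero distances equals that
of `X`. -/
theorem stmt_11 {X : Type*} [MetricSpace X] [Finite X]
    (hum : ∀ x y z : X, dist x z ≤ max (dist x y) (dist y z)) :
    ∃ (Y : Type) (dY : Y → Y → ℝ) (e : X → Y),
      Finite Y ∧
      (∀ y : Y, dY y y = 0) ∧
      (∀ y₁ y₂ : Y, 0 ≤ dY y₁ y₂) ∧
      (∀ y₁ y₂ : Y, dY y₁ y₂ = dY y₂ y₁) ∧
      (∀ y₁ y₂ : Y, dY y₁ y₂ = 0 → y₁ = y₂) ∧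
      (∀ y₁ y₂ y₃ : Y, dY y₁ y₃ ≤ max (dY y₁ y₂) (dY y₂ y₃)) ∧
      (∀ x₁ x₂ : X, dY (e x₁) (e x₂) = dist x₁ x₂) ∧
      (∀ y₁ y₂ : Y, ∃ f : Y → Y, Function.Bijective f ∧
        (∀ a b : Y, dY (f a) (f b) = dY a b) ∧ f y₁ = y₂) ∧
      {d : ℝ | ∃ y₁ y₂ : Y, y₁ ≠ y₂ ∧ d = dY y₁ y₂} =
        {d : ℝ | ∃ x₁ x₂ : X, x₁ ≠ x₂ ∧ d = dist x₁ x₂} := by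
  letI : Fintype X := Fintype.ofFinite X
  refine ⟨YT X, dY, emb, Finite.of_fintype _, dY_self, dY_nonneg, dY_comm, ?_, dY_ultra,
    dY_emb hum, ?_, ?_⟩
  · intro y₁ y₂ h
    by_contra hne
    exact absurd h (ne_of_gt (dY_mem_DF hne).2)
  · -- homogeneity via translations
    intro y₁ y₂
    refine ⟨fun a => a + (y₂ - y₁), ?_, ?_, by show y₁ + (y₂ - y₁) = y₂; rw [add_comm]; exact sub_add_cancel y₂ y₁⟩
    · constructor
      · intro a b hab
        have := congrArg (fun c => c - (y₂ - y₁)) hab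
        simpa using this
      · intro b
        exact ⟨b - (y₂ - y₁), sub_add_cancel b _⟩
    · intro a b
      have hdd : dif (a + (y₂ - y₁)) (b + (y₂ - y₁)) = dif a b := by
        ext r
        simp only [mem_dif]
        constructor
        · intro h hab
          exact h (by show a r + _ = b r + _; rw [show a r = b r from hab])
        · intro h hab
          apply h
          have : a r + (y₂ - y₁) r = b r + (y₂ - y₁) r := hab
          exact add_right_cancel this
      rw [dY, dY, dYn, dYn, hdd]
  · -- equality of distance sets
    ext d
    simp only [Set.mem_setOf_eq]
    constructor
    · rintro ⟨y₁, y₂, hne, rfl⟩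
      exact mem_DF.1 (dY_mem_DF hne).1
    · rintro ⟨x₁, x₂, hne, rfl⟩
      have hd : dist x₁ x₂ ∈ DF X := mem_DF.2 ⟨x₁, x₂, hne, rfl⟩
      haveI : Fact (1 < mX X) := ⟨by simp [mX]⟩
      classical
      set r₀ : ↥(DF X) := ⟨dist x₁ x₂, hd⟩ with hr₀
      refine ⟨(fun _ => 0 : YT X), (fun r => if r = r₀ then 1 else 0 : YT X), ?_, ?_⟩
      · intro h
        have h0 : (0 : ZMod (mX X)) = 1 := by simpa using congrFun h r₀
        exact zero_ne_one h0
      · have hdif : dif (fun _ => 0 : YT X) (fun r => if r = r₀ then 1 else 0 : YT X)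
            = {r₀} := by
          ext r
          refine mem_dif.trans ?_; rw [Finset.mem_singleton]
          by_cases h : r = r₀ <;> simp [h]
        simp only [dY, dYn, hdif, Finset.sup_singleton]
        rw [Real.coe_toNNReal _ dist_nonneg]
end

section
/- Let Y be a compact metric space and suppose that for every ε > 0 and every partial isometry p: A → B between finite subsets of Y, there is a surjective isometry φ of Y with d(φ(a), p(a)) < ε for all a ∈ A. Then Y is ultrahomogeneous: every partial isometry between finite subsets of Y extends to a surjective isometry of Y. -/
/-- let `Y` be a compact metric space such that every partial isometry
between finite subsets of `Y` can be `ε`-approximated on its domain by a surjective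
isometry of `Y`, for every `ε > 0`. Then `Y` is ultrahomogeneous: every partial
isometry between finite subsets extends to a surjective isometry of `Y`. -/
theorem stmt_12 {Y : Type*} [MetricSpace Y] [CompactSpace Y]
    (happrox : ∀ ε : ℝ, 0 < ε → ∀ (A : Finset Y) (f : Y → Y),
      (∀ a ∈ A, ∀ b ∈ A, dist (f a) (f b) = dist a b) →
      ∃ φ : Y ≃ᵢ Y, ∀ a ∈ A, dist (φ a) (f a) < ε) :
    ∀ (A : Finset Y) (f : Y → Y),
      (∀ a ∈ A, ∀ b ∈ A, dist (f a) (f b) = dist a b) →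
      ∃ φ : Y ≃ᵢ Y, ∀ a ∈ A, φ a = f a := by
  intro A f hf
  -- choose approximating isometries
  have hchoice : ∀ n : ℕ, ∃ φ : Y ≃ᵢ Y, ∀ a ∈ A, dist (φ a) (f a) < 1 / (n + 1) := by
    intro n
    exact happrox (1 / (n + 1)) (by positivity) A f hf
  choose φ hφ using hchoice
  -- take an ultrafilter extending atTop
  let L : Ultrafilter ℕ := Ultrafilter.of Filter.atTop
  have hL : (L : Filter ℕ) ≤ Filter.atTop := Ultrafilter.of_le _
  -- pointwise ultrafilter limits
  let g : Y → Y := fun y => (L.map (fun n => φ n y)).lim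
  let h : Y → Y := fun y => (L.map (fun n => (φ n).symm y)).lim
  have hg : ∀ y : Y, Filter.Tendsto (fun n => φ n y) L (nhds (g y)) := fun y =>
    (L.map (fun n => φ n y)).le_nhds_lim
  have hh : ∀ y : Y, Filter.Tendsto (fun n => (φ n).symm y) L (nhds (h y)) := fun y =>
    (L.map (fun n => (φ n).symm y)).le_nhds_lim
  -- g is an isometry
  have hgiso : ∀ y z : Y, dist (g y) (g z) = dist y z := by
    intro y z
    have h1 : Filter.Tendsto (fun n => dist (φ n y) (φ n z)) L (nhds (dist (g y) (g z))) :=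
      ((hg y).dist (hg z))
    have h2 : (fun n : ℕ => dist (φ n y) (φ n z)) = fun _ => dist y z := by
      funext n; exact (φ n).isometry.dist_eq y z
    rw [h2] at h1
    exact (tendsto_nhds_unique tendsto_const_nhds h1).symm
  -- h is a two-sided inverse of g
  have key : ∀ (y : Y), dist (g (h y)) y = 0 := by
    intro y
    have hb : ∀ n : ℕ, dist (g (h y)) y ≤ dist (g (h y)) (φ n (h y)) + dist (h y) ((φ n).symm y) := by
      intro n
      have : dist (φ n (h y)) y = dist (h y) ((φ n).symm y) := by
        rw [← (φ n).symm.isometry.dist_eq]; simp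
      calc dist (g (h y)) y ≤ dist (g (h y)) (φ n (h y)) + dist (φ n (h y)) y := dist_triangle _ _ _
        _ = dist (g (h y)) (φ n (h y)) + dist (h y) ((φ n).symm y) := by rw [this]
    have ht : Filter.Tendsto
        (fun n => dist (g (h y)) (φ n (h y)) + dist (h y) ((φ n).symm y)) L (nhds 0) := by
      have t1 : Filter.Tendsto (fun n => dist (g (h y)) (φ n (h y))) L (nhds 0) := by
        have := (tendsto_const_nhds (x := g (h y)) (f := (L : Filter ℕ))).dist (hg (h y))
        simpa using this
      have t2 : Filter.Tendsto (fun n => dist (h y) ((φ n).symm y)) L (nhds 0) := by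
        have := (tendsto_const_nhds (x := h y) (f := (L : Filter ℕ))).dist (hh y)
        simpa using this
      simpa using t1.add t2
    have : dist (g (h y)) y ≤ 0 :=
      le_of_tendsto_of_tendsto' tendsto_const_nhds ht hb
    exact le_antisymm this dist_nonneg
  have hgh : ∀ y : Y, g (h y) = y := fun y => by
    have := key y; rwa [dist_eq_zero] at this
  have hhg : ∀ y : Y, h (g y) = y := by
    intro y
    have : g (h (g y)) = g y := hgh (g y)
    have hinj : Function.Injective g := fun a b hab => by
      have := hgiso a b; rw [hab, dist_self] at this
      exact (dist_eq_zero.mp this.symm)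
    exact hinj this
  -- build the isometry equivalence
  refine ⟨⟨⟨g, h, hhg, hgh⟩, Isometry.of_dist_eq hgiso⟩, ?_⟩
  -- it agrees with f on A
  intro a ha
  have hfa : Filter.Tendsto (fun n => φ n a) Filter.atTop (nhds (f a)) := by
    rw [tendsto_iff_dist_tendsto_zero]
    have hb : ∀ n : ℕ, dist (φ n a) (f a) ≤ 1 / (n + 1) := fun n => (hφ n a ha).le
    refine squeeze_zero (fun n => dist_nonneg) hb ?_
    exact tendsto_one_div_add_atTop_nhds_zero_nat
  have : Filter.Tendsto (fun n => φ n a) L (nhds (f a)) := hfa.mono_left hL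
  exact tendsto_nhds_unique (hg a) this
end

section
/- Let F be a group, H ≤ F a subgroup, and N ⊴ F a normal subgroup. For p, q, r, s ∈ F, the following are equivalent: (1) there exists g ∈ F with gpNH = rNH and gqNH = sNH (as left cosets of the subgroup NH); (2) N ∩ pHr^{-1}sHq^{-1} ≠ ∅. -/
open Pointwise

/-- for a group `F`, subgroups `H ≤ F` and `N ⊴ F`, with `K = NH`,
and `p, q, r, s ∈ F`: there exists `g` with `gpNH = rNH` and `gqNH = sNH` iff
`N ∩ pHr⁻¹sHq⁻¹ ≠ ∅`. -/
theorem stmt_15 {F : Type*} [Group F] (H N : Subgroup F) [N.Normal]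
    (K : Subgroup F) (hK : (K : Set F) = (N : Set F) * (H : Set F))
    (p q r s : F) :
    (∃ g : F, (g * p)⁻¹ * r ∈ K ∧ (g * q)⁻¹ * s ∈ K) ↔
    (∃ n ∈ N, ∃ h₁ ∈ H, ∃ h₂ ∈ H, n = p * h₁ * r⁻¹ * s * h₂ * q⁻¹) := by
  constructor
  · rintro ⟨g, h1, h2⟩
    have h1' : (g * p)⁻¹ * r ∈ (N : Set F) * (H : Set F) := hK ▸ h1
    have h2' : (g * q)⁻¹ * s ∈ (N : Set F) * (H : Set F) := hK ▸ h2
    obtain ⟨n₁, hn₁, h₁, hh₁, e₁⟩ := h1'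
    obtain ⟨n₂, hn₂, h₂, hh₂, e₂⟩ := h2'
    refine ⟨(p * n₁⁻¹ * p⁻¹) * (q * n₂ * q⁻¹), mul_mem
      (Subgroup.Normal.conj_mem ‹N.Normal› _ (inv_mem hn₁) p)
      (Subgroup.Normal.conj_mem ‹N.Normal› _ hn₂ q), h₁, hh₁, h₂⁻¹, inv_mem hh₂, ?_⟩
    have e₁' : n₁ * h₁ = (g * p)⁻¹ * r := e₁
    have e₂' : n₂ * h₂ = (g * q)⁻¹ * s := e₂
    have hr : r = g * p * (n₁ * h₁) := by rw [e₁']; group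
    have hs : s = g * q * (n₂ * h₂) := by rw [e₂']; group
    rw [hr, hs]; group
  · rintro ⟨n, hn, h₁, hh₁, h₂, hh₂, e⟩
    refine ⟨r * h₁⁻¹ * p⁻¹, ?_, ?_⟩
    · have : (r * h₁⁻¹ * p⁻¹ * p)⁻¹ * r = h₁ := by group
      rw [this, ← SetLike.mem_coe, hK]
      exact ⟨1, one_mem _, h₁, hh₁, one_mul _⟩
    · have key : (r * h₁⁻¹ * p⁻¹ * q)⁻¹ * s = (q⁻¹ * n * q) * h₂⁻¹ := by
        rw [e]; group
      rw [key, ← SetLike.mem_coe, hK]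
      exact ⟨q⁻¹ * n * q, Subgroup.Normal.conj_mem' ‹N.Normal› _ hn q,
        h₂⁻¹, inv_mem hh₂, rfl⟩
end

section
/- Let X be a countable metric space. Then X embeds isometrically into a countable ultrahomogeneous metric space Y, where Y is obtained as an increasing union of finite metric spaces Y_n together with isometric extensions: if Y = ⋃_n Y_n where Y_1 ⊆ Y_2 ⊆ ⋯ are metric spaces and for every n and every partial isometry p of Y_n there is, for each m ≥ n, an isometry φ_m(p) of Y_m extending p with φ_m(p) ⊆ φ_{m+1}(p), then every partial isometry of Y extends to a surjective isometry of Y. -/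
/-- let `Y` be a countable metric space which is the increasing union
of finite subspaces `Y_n`, and suppose that every partial isometry `p` of `Y_n`
admits, for each `m ≥ n`, an isometry `φ_m(p)` of `Y_m` extending `p` with
`φ_m(p) ⊆ φ_{m+1}(p)`. Then every partial isometry of `Y` extends to a surjective
isometry of `Y` (i.e. `Y` is ultrahomogeneous). -/
theorem stmt_16 {Y : Type*} [MetricSpace Y] [Countable Y]
    (Yn : ℕ → Set Y) (hfin : ∀ n, (Yn n).Finite) (hmono : Monotone Yn)
    (hunion : (⋃ n, Yn n) = Set.univ)
    (hext : ∀ (n : ℕ) (D : Finset Y) (f : Y → Y),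
      ↑D ⊆ Yn n → (∀ a ∈ D, f a ∈ Yn n) →
      (∀ a ∈ D, ∀ b ∈ D, dist (f a) (f b) = dist a b) →
      ∃ g : ℕ → Y → Y, ∀ m : ℕ, n ≤ m →
        Set.BijOn (g m) (Yn m) (Yn m) ∧
        (∀ a ∈ Yn m, ∀ b ∈ Yn m, dist (g m a) (g m b) = dist a b) ∧
        (∀ a ∈ D, g m a = f a) ∧
        (∀ a ∈ Yn m, g (m + 1) a = g m a)) :
    ∀ (D : Finset Y) (f : Y → Y),
      (∀ a ∈ D, ∀ b ∈ D, dist (f a) (f b) = dist a b) →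
      ∃ ψ : Y ≃ᵢ Y, ∀ a ∈ D, ψ a = f a := by
  intro D f hiso
  -- every point is in some Yn
  have hmem : ∀ y : Y, ∃ k, y ∈ Yn k := by
    intro y
    have : y ∈ ⋃ n, Yn n := by rw [hunion]; trivial
    exact Set.mem_iUnion.1 this
  choose K hK using hmem
  -- a level containing D and f '' D
  set n : ℕ := D.sup (fun a => max (K a) (K (f a))) with hn
  have hDn : ↑D ⊆ Yn n := by
    intro a ha
    exact hmono (le_trans (le_max_left _ _) (Finset.le_sup (f := fun a => max (K a) (K (f a))) ha)) (hK a)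
  have hfDn : ∀ a ∈ D, f a ∈ Yn n := by
    intro a ha
    exact hmono (le_trans (le_max_right _ _) (Finset.le_sup (f := fun a => max (K a) (K (f a))) ha)) (hK (f a))
  obtain ⟨g, hg⟩ := hext n D f hDn hfDn hiso
  -- stability: for n ≤ m ≤ m', g m' agrees with g m on Yn m
  have stable : ∀ m, n ≤ m → ∀ m', m ≤ m' → ∀ y ∈ Yn m, g m' y = g m y := by
    intro m hm m' hm'
    induction m' , hm' using Nat.le_induction with
    | base => intro y _; rfl
    | succ m' hmm' ih =>
      intro y hy
      have hy' : y ∈ Yn m' := hmono hmm' hy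
      rw [(hg m' (le_trans hm hmm')).2.2.2 y hy', ih y hy]
  -- define the global map
  set N : Y → ℕ := fun y => max n (K y) with hN
  have hNn : ∀ y, n ≤ N y := fun y => le_max_left _ _
  have hNy : ∀ y, y ∈ Yn (N y) := fun y => hmono (le_max_right _ _) (hK y)
  set ψ : Y → Y := fun y => g (N y) y with hψ
  -- ψ agrees with g m on Yn m for m ≥ n
  have hagree : ∀ m, n ≤ m → ∀ y ∈ Yn m, ψ y = g m y := by
    intro m hm y hy
    have h1 : g (max m (N y)) y = g (N y) y := stable (N y) (hNn y) _ (le_max_right _ _) y (hNy y)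
    have h2 : g (max m (N y)) y = g m y := stable m hm _ (le_max_left _ _) y hy
    simp only [hψ]
    rw [← h1, h2]
  -- ψ preserves distances
  have hdist : ∀ x y : Y, dist (ψ x) (ψ y) = dist x y := by
    intro x y
    set M := max (N x) (N y) with hM
    have hMn : n ≤ M := le_trans (hNn x) (le_max_left _ _)
    have hxM : x ∈ Yn M := hmono (le_max_left _ _) (hNy x)
    have hyM : y ∈ Yn M := hmono (le_max_right _ _) (hNy y)
    rw [hagree M hMn x hxM, hagree M hMn y hyM]
    exact (hg M hMn).2.1 x hxM y hyM
  have hinj : Function.Injective ψ := by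
    intro x y h
    have : dist x y = 0 := by rw [← hdist, h, dist_self]
    exact dist_eq_zero.1 this
  have hsurj : Function.Surjective ψ := by
    intro z
    have hzM : z ∈ Yn (N z) := hNy z
    obtain ⟨w, hw, hwz⟩ := (hg (N z) (hNn z)).1.surjOn hzM
    exact ⟨w, by rw [hagree (N z) (hNn z) w hw]; exact hwz⟩
  refine ⟨⟨Equiv.ofBijective ψ ⟨hinj, hsurj⟩, Isometry.of_dist_eq hdist⟩, ?_⟩
  intro a ha
  have : ψ a = f a := by
    rw [hagree n le_rfl a (hDn ha)]
    exact (hg n le_rfl).2.2.1 a ha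
  exact this
end
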